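/- Let A be a commutative F_p-algebra, B an A-algebra, and ξ : B → B an A-linear map with ξ^p = 0. Then the coaction exp(ξε) : B → B ⊗ A[ε]/(ε^p) is an A-algebra homomorphism (equivalently, the α_p-action respects the algebra structure) if and only if ξ is an A-derivation of B. -/

import Mathlib

open Polynomial TensorProduct

noncomputable section

/-- `A[ε] = A[x]/(x^p)`. -/
abbrev Aeps (p : ℕ) (A : Type*) [CommRing A] : Type _ :=
  AdjoinRoot ((X : A[X]) ^ p)

/-- The class of `x`, i.e. `ε`. -/
def eps (p : ℕ) (A : Type*) [CommRing A] : Aeps p A := AdjoinRoot.root _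

/-- The inverse of `i!` in `A` (through `ℤ/p`). -/
def invFact (p : ℕ) (A : Type*) [CommRing A] [CharP A p] (i : ℕ) : A :=
  ZMod.castHom (dvd_refl p) A ((i.factorial : ZMod p)⁻¹)

/-- The coaction `exp(ξ ε) : M → M ⊗ A[ε]/(ε^p)`, `m ↦ ∑ ξ^i(m)/i! ⊗ ε^i`. -/
def expCoact (p : ℕ) (A : Type*) [CommRing A] [CharP A p]
    {M : Type*} [AddCommGroup M] [Module A M] (ξ : Module.End A M) :
    M →ₗ[A] M ⊗[A] Aeps p A :=
  ∑ i ∈ Finset.range p,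
    invFact p A i • ((TensorProduct.mk A M (Aeps p A)).flip ((eps p A) ^ i) ∘ₗ (ξ ^ i))

section Aux

open Finset

variable (p : ℕ) (A : Type*) [CommRing A]

theorem eps_pow_self : (eps p A) ^ p = 0 := by
  rw [eps, ← AdjoinRoot.mk_X, ← map_pow, AdjoinRoot.mk_self]

theorem eps_pow_of_le {n : ℕ} (h : p ≤ n) : (eps p A) ^ n = 0 := by
  rw [← Nat.sub_add_cancel h, pow_add, eps_pow_self, mul_zero]

theorem expCoact_apply [CharP A p] {M : Type*} [AddCommGroup M] [Module A M]
    (ξ : Module.End A M) (m : M) :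
    expCoact p A ξ m
      = ∑ i ∈ Finset.range p, invFact p A i • ((ξ ^ i) m ⊗ₜ[A] ((eps p A) ^ i)) := by
  simp [expCoact, LinearMap.sum_apply]

theorem invFact_zero [CharP A p] : invFact p A 0 = 1 := by simp [invFact]

theorem invFact_one [CharP A p] : invFact p A 1 = 1 := by simp [invFact]

theorem invFact_key [CharP A p] (hp : p.Prime) {k n : ℕ} (hk : k ≤ n) (hn : n < p) :
    invFact p A n * ((n.choose k : ℕ) : A) = invFact p A k * invFact p A (n - k) := by
  have : Fact p.Prime := ⟨hp⟩
  have hkey : ((n.factorial : ZMod p)⁻¹) * ((n.choose k : ℕ) : ZMod p)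
      = ((k.factorial : ZMod p)⁻¹) * (((n - k).factorial : ZMod p)⁻¹) := by
    have hnz : ∀ m : ℕ, m < p → ((m.factorial : ZMod p) ≠ 0) := by
      intro m hm
      rw [Ne, ZMod.natCast_eq_zero_iff]
      rw [hp.dvd_factorial]
      omega
    have h1 := hnz n hn
    have h2 := hnz k (lt_of_le_of_lt hk hn)
    have h3 := hnz (n - k) (lt_of_le_of_lt (Nat.sub_le n k) hn)
    field_simp
    have hnat := Nat.choose_mul_factorial_mul_factorial hk
    have hc : ((n.choose k * k.factorial * (n-k).factorial : ℕ) : ZMod p)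
        = ((n.factorial : ℕ) : ZMod p) := by rw [hnat]
    push_cast at hc ⊢
    linear_combination hc
  calc invFact p A n * ((n.choose k : ℕ) : A)
      = ZMod.castHom (dvd_refl p) A (((n.factorial : ZMod p)⁻¹) * ((n.choose k : ℕ) : ZMod p)) := by
        rw [map_mul, map_natCast]; rfl
    _ = _ := by rw [hkey, map_mul]; rfl

variable [Nontrivial A]

/-- power basis of Aeps -/
def pbA (hp : 0 < p) : PowerBasis A (Aeps p A) :=
  AdjoinRoot.powerBasis' (monic_X_pow p)

theorem pbA_dim (hp : 0 < p) : (pbA p A hp).dim = p := by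
  simp [pbA, natDegree_X_pow]

/-- the coordinate functional of ε^k -/
def epsCoord (hp : 0 < p) (k : ℕ) (hk : k < p) : Aeps p A →ₗ[A] A :=
  (pbA p A hp).basis.coord ⟨k, by rw [pbA_dim]; exact hk⟩

theorem epsCoord_eps_pow (hp : 0 < p) {k j : ℕ} (hk : k < p) (hj : j < p) :
    epsCoord p A hp k hk ((eps p A) ^ j) = if j = k then 1 else 0 := by
  have hb : (eps p A) ^ j = (pbA p A hp).basis ⟨j, by rw [pbA_dim]; exact hj⟩ := by
    rw [(pbA p A hp).basis_eq_pow]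
    rfl
  rw [hb, epsCoord, Module.Basis.coord_apply, Module.Basis.repr_self, Finsupp.single_apply]
  by_cases h : j = k
  · subst h; simp
  · rw [if_neg (by simpa [Fin.ext_iff] using h), if_neg h]

variable (B : Type*) [CommRing B] [Algebra A B]

/-- coefficient extraction on the tensor product -/
def tcoord (hp : 0 < p) (k : ℕ) (hk : k < p) : B ⊗[A] Aeps p A →ₗ[A] B :=
  (TensorProduct.rid A B).toLinearMap ∘ₗ LinearMap.lTensor B (epsCoord p A hp k hk)

theorem tcoord_tmul (hp : 0 < p) {k : ℕ} (hk : k < p) (b : B) (j : ℕ) :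
    tcoord p A B hp k hk (b ⊗ₜ[A] ((eps p A) ^ j)) = if j = k then b else 0 := by
  by_cases hj : j < p
  · rw [tcoord, LinearMap.comp_apply, LinearMap.lTensor_tmul,
      epsCoord_eps_pow p A hp hk hj]
    by_cases h : j = k
    · simp [h]
    · simp [h]
  · rw [eps_pow_of_le p A (le_of_not_gt hj), tmul_zero, map_zero,
      if_neg (by omega)]

theorem tcoord_one_expCoact [CharP A p] (hp0 : 0 < p) (hp1 : 1 < p)
    (ξ : Module.End A B) (z : B) :
    tcoord p A B hp0 1 hp1 (expCoact p A ξ z) = ξ z := by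
  rw [expCoact_apply, map_sum]
  have hterm : ∀ i ∈ Finset.range p,
      tcoord p A B hp0 1 hp1 (invFact p A i • ((ξ ^ i) z ⊗ₜ[A] ((eps p A) ^ i)))
        = if i = 1 then invFact p A i • (ξ ^ i) z else 0 := by
    intro i _
    rw [map_smul, tcoord_tmul]
    split_ifs <;> simp
  rw [Finset.sum_congr rfl hterm,
    Finset.sum_ite_eq' (Finset.range p) 1 (fun i => invFact p A i • (ξ ^ i) z),
    if_pos (Finset.mem_range.mpr hp1), invFact_one, one_smul, pow_one]

end Aux

section Comb

open Finset

theorem leibniz_iter {A B : Type*} [CommRing A] [CommRing B] [Algebra A B]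
    (ξ : Module.End A B) (hd : ∀ x y : B, ξ (x * y) = ξ x * y + x * ξ y)
    (n : ℕ) (x y : B) :
    (ξ ^ n) (x * y) = ∑ k ∈ range (n + 1), n.choose k • ((ξ ^ k) x * (ξ ^ (n - k)) y) := by
  induction n with
  | zero => simp
  | succ n ih =>
    have hstep : (ξ ^ (n+1)) (x*y) = ξ ((ξ ^ n) (x*y)) := by
      rw [pow_succ', Module.End.mul_apply]
    rw [hstep, ih, map_sum]
    have hterm : ∀ k ∈ range (n+1),
        ξ (n.choose k • ((ξ ^ k) x * (ξ ^ (n - k)) y))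
          = n.choose k • ((ξ ^ (k+1)) x * (ξ ^ (n - k)) y)
            + n.choose k • ((ξ ^ k) x * (ξ ^ (n - k + 1)) y) := by
      intro k _
      rw [map_nsmul, hd, smul_add]
      congr 2
      · rw [pow_succ', Module.End.mul_apply]
      · rw [pow_succ', Module.End.mul_apply]
    rw [Finset.sum_congr rfl hterm, Finset.sum_add_distrib]
    have h1 : (∑ k ∈ range (n+2),
          (if k = 0 then 0 else n.choose (k-1) • ((ξ ^ k) x * (ξ ^ (n + 1 - k)) y)))
        = ∑ k ∈ range (n+1), n.choose k • ((ξ ^ (k+1)) x * (ξ ^ (n - k)) y) := by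
      rw [Finset.sum_range_succ' _ (n+1)]
      rw [if_pos rfl, add_zero]
      refine Finset.sum_congr rfl fun k hk => ?_
      rw [if_neg (Nat.succ_ne_zero k), Nat.add_sub_cancel]
      have h : n + 1 - (k + 1) = n - k := by omega
      rw [h]
    have h2 : (∑ k ∈ range (n+2),
          (if k = n+1 then 0 else n.choose k • ((ξ ^ k) x * (ξ ^ (n + 1 - k)) y)))
        = ∑ k ∈ range (n+1), n.choose k • ((ξ ^ k) x * (ξ ^ (n - k + 1)) y) := by
      rw [Finset.sum_range_succ]
      rw [if_pos rfl, add_zero]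
      refine Finset.sum_congr rfl fun k hk => ?_
      rw [Finset.mem_range] at hk
      rw [if_neg (by omega)]
      have h : n + 1 - k = n - k + 1 := by omega
      rw [h]
    rw [← h1, ← h2, ← Finset.sum_add_distrib]
    refine Finset.sum_congr rfl fun k hk => ?_
    rw [Finset.mem_range] at hk
    rcases Nat.eq_zero_or_pos k with hk0 | hk0
    · subst hk0; simp
    rcases eq_or_ne k (n+1) with hkn | hkn
    · subst hkn
      simp [Nat.choose_self, Nat.add_sub_cancel_left, Nat.choose_succ_self_right]
    · rw [if_neg (by omega), if_neg hkn, ← add_nsmul]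
      obtain ⟨m, rfl⟩ := Nat.exists_eq_succ_of_ne_zero (by omega : k ≠ 0)
      congr 1

theorem tri_sum {N : Type*} [AddCommMonoid N] (p : ℕ) (g : ℕ → ℕ → N)
    (hg : ∀ i j, p ≤ i + j → g i j = 0) :
    ∑ n ∈ range p, ∑ k ∈ range (n + 1), g k (n - k)
      = ∑ i ∈ range p, ∑ j ∈ range p, g i j := by
  classical
  rw [Finset.sum_sigma' (range p) (fun n => range (n+1)) (fun n k => g k (n - k)),
    ← Finset.sum_product' (range p) (range p) (fun i j => g i j)]
  rw [← Finset.sum_filter_add_sum_filter_not (range p ×ˢ range p) (fun q => q.1 + q.2 < p)]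
  have h2 : ∑ q ∈ (range p ×ˢ range p).filter (fun q => ¬ q.1 + q.2 < p), g q.1 q.2 = 0 := by
    apply Finset.sum_eq_zero
    intro q hq
    rw [Finset.mem_filter] at hq
    exact hg q.1 q.2 (by omega)
  rw [h2, add_zero]
  refine Finset.sum_nbij' (fun a => (a.2, a.1 - a.2)) (fun q => ⟨q.1 + q.2, q.1⟩)
    ?_ ?_ ?_ ?_ ?_
  · rintro ⟨n, k⟩ ha
    simp only [Finset.mem_sigma, Finset.mem_range] at ha
    simp only [Finset.mem_filter, Finset.mem_product, Finset.mem_range]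
    omega
  · rintro ⟨i, j⟩ hq
    simp only [Finset.mem_filter, Finset.mem_product, Finset.mem_range] at hq
    simp only [Finset.mem_sigma, Finset.mem_range]
    omega
  · rintro ⟨n, k⟩ ha
    simp only [Finset.mem_sigma, Finset.mem_range] at ha
    have h : k + (n - k) = n := by omega
    simp [h]
  · rintro ⟨i, j⟩ hq
    simp
  · rintro ⟨n, k⟩ ha
    rfl

theorem pair_sum {N : Type*} [AddCommMonoid N] {p : ℕ} (hp : 1 < p) (f : ℕ → ℕ → N) :
    ∑ i ∈ range p, ∑ j ∈ range p, (if i + j = 1 then f i j else 0) = f 0 1 + f 1 0 := by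
  classical
  rw [← Finset.sum_product' (range p) (range p)
    (fun i j => if i + j = 1 then f i j else 0)]
  have hsub : ({(0,1),(1,0)} : Finset (ℕ×ℕ)) ⊆ range p ×ˢ range p := by
    intro q hq
    simp only [Finset.mem_insert, Finset.mem_singleton] at hq
    rcases hq with rfl | rfl <;>
      (simp only [Finset.mem_product, Finset.mem_range]; omega)
  have hzero : ∀ q ∈ range p ×ˢ range p, q ∉ ({(0,1),(1,0)} : Finset (ℕ×ℕ)) →
      (if q.1 + q.2 = 1 then f q.1 q.2 else 0) = 0 := by
    rintro ⟨i, j⟩ - hq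
    simp only [Finset.mem_insert, Finset.mem_singleton, Prod.mk.injEq] at hq
    rw [if_neg (by omega)]
  rw [← Finset.sum_subset hsub hzero, Finset.sum_pair (by decide)]
  norm_num

end Comb

/-- For a commutative `A`-algebra `B` and a `p`-nilpotent `A`-linear `ξ : B → B`, the
coaction `exp(ξε) : B → B ⊗ A[ε]/(ε^p)` is an `A`-algebra homomorphism (unital and
multiplicative) iff `ξ` is an `A`-derivation of `B`. -/
theorem stmt10 (p : ℕ) [Fact p.Prime] (A : Type*) [CommRing A] [CharP A p]
    (B : Type*) [CommRing B] [Algebra A B] (ξ : Module.End A B) (hξ : ξ ^ p = 0) :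
    (expCoact p A ξ 1 = 1 ∧
        ∀ x y : B, expCoact p A ξ (x * y) = expCoact p A ξ x * expCoact p A ξ y) ↔
      ((∀ a : A, ξ (algebraMap A B a) = 0) ∧
        ∀ x y : B, ξ (x * y) = ξ x * y + x * ξ y) := by
  have hp : p.Prime := Fact.out
  have hp0 : 0 < p := hp.pos
  have hp1 : 1 < p := hp.one_lt
  haveI : Nontrivial A := CharP.nontrivial_of_char_ne_one hp.ne_one
  constructor
  · rintro ⟨h1, hmul⟩
    have hone : ξ 1 = 0 := by
      have h := congrArg (tcoord p A B hp0 1 hp1) h1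
      rw [tcoord_one_expCoact] at h
      rw [show (1 : B ⊗[A] Aeps p A) = (1:B) ⊗ₜ[A] ((eps p A) ^ 0) by
        rw [pow_zero]; rfl] at h
      rw [tcoord_tmul p A B hp0 hp1 1 0, if_neg (by omega)] at h
      exact h
    refine ⟨fun a => ?_, fun x y => ?_⟩
    · rw [Algebra.algebraMap_eq_smul_one, map_smul, hone, smul_zero]
    · have h := congrArg (tcoord p A B hp0 1 hp1) (hmul x y)
      rw [tcoord_one_expCoact] at h
      rw [expCoact_apply, expCoact_apply, Finset.sum_mul_sum, map_sum] at h
      have hstep : ∀ i ∈ Finset.range p,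
          tcoord p A B hp0 1 hp1
            (∑ j ∈ Finset.range p,
              (invFact p A i • ((ξ ^ i) x ⊗ₜ[A] ((eps p A) ^ i)))
                * (invFact p A j • ((ξ ^ j) y ⊗ₜ[A] ((eps p A) ^ j))))
            = ∑ j ∈ Finset.range p,
                (if i + j = 1 then (invFact p A i * invFact p A j) • ((ξ ^ i) x * (ξ ^ j) y)
                else 0) := by
        intro i _
        rw [map_sum]
        refine Finset.sum_congr rfl fun j _ => ?_
        rw [smul_mul_smul_comm, Algebra.TensorProduct.tmul_mul_tmul, ← pow_add,
          map_smul, tcoord_tmul]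
        split_ifs <;> simp
      rw [Finset.sum_congr rfl hstep,
        pair_sum hp1 (fun i j => (invFact p A i * invFact p A j) • ((ξ ^ i) x * (ξ ^ j) y))] at h
      simp only [invFact_zero, invFact_one, one_mul, mul_one, one_smul, pow_zero, pow_one,
        Module.End.one_apply] at h
      rw [h, add_comm]
  · rintro ⟨hA, hd⟩
    have hone : ξ 1 = 0 := by
      have h := hA 1
      rwa [map_one] at h
    constructor
    · rw [expCoact_apply, Finset.sum_eq_single 0]
      · simp [invFact_zero, Algebra.TensorProduct.one_def]
      · intro i _ hi
        obtain ⟨m, rfl⟩ := Nat.exists_eq_succ_of_ne_zero hi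
        rw [pow_succ, Module.End.mul_apply, hone, map_zero, zero_tmul, smul_zero]
      · intro h; exact absurd (Finset.mem_range.mpr hp0) h
    · intro x y
      rw [expCoact_apply, expCoact_apply, expCoact_apply, Finset.sum_mul_sum]
      have hL : ∀ n ∈ Finset.range p,
          invFact p A n • ((ξ ^ n) (x*y) ⊗ₜ[A] ((eps p A) ^ n))
            = ∑ k ∈ Finset.range (n+1),
                (invFact p A k * invFact p A (n-k))
                  • (((ξ ^ k) x * (ξ ^ (n-k)) y) ⊗ₜ[A] ((eps p A) ^ (k+(n-k)))) := by
        intro n hn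
        rw [Finset.mem_range] at hn
        rw [leibniz_iter ξ hd n x y, TensorProduct.sum_tmul, Finset.smul_sum]
        refine Finset.sum_congr rfl fun k hk => ?_
        rw [Finset.mem_range] at hk
        have hkn : k ≤ n := by omega
        have hn' : k + (n - k) = n := by omega
        rw [← Nat.cast_smul_eq_nsmul A (n.choose k), ← TensorProduct.smul_tmul', smul_smul,
          invFact_key p A hp hkn hn, hn']
      rw [Finset.sum_congr rfl hL,
        tri_sum p (fun i j => (invFact p A i * invFact p A j)
          • (((ξ ^ i) x * (ξ ^ j) y) ⊗ₜ[A] ((eps p A) ^ (i+j))))]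
      · refine Finset.sum_congr rfl fun i _ => Finset.sum_congr rfl fun j _ => ?_
        rw [smul_mul_smul_comm, Algebra.TensorProduct.tmul_mul_tmul, ← pow_add]
      · intro i j hij
        rw [eps_pow_of_le p A hij, tmul_zero, smul_zero]

end
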